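/- Every MILP-representable set is a MIC set. More precisely, if S ⊆ ℝ^n is MILP-representable, then there exist finitely many affine Chvátal functions g_i : ℝ^n → ℝ, i ∈ I, such that S = {x ∈ ℝ^n : g_i(x) ≤ 0 for all i ∈ I}. -/

import Mathlib

/-- Binary tree representation of an affine Chvátal function on `ℝ^n`. -/
inductive ChvatalTree (n : ℕ) : Type
  | leaf (a : Fin n → ℚ) (c : ℚ) : ChvatalTree n
  | ceil (t : ChvatalTree n) : ChvatalTree n
  | scale (a : ℚ) (t : ChvatalTree n) : ChvatalTree n
  | comb (a b : ℚ) (t₁ t₂ : ChvatalTree n) : ChvatalTree n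

namespace ChvatalTree

/-- The function computed by the tree. -/
noncomputable def eval {n : ℕ} : ChvatalTree n → (Fin n → ℝ) → ℝ
  | leaf a c, x => (∑ j, (a j : ℝ) * x j) + (c : ℝ)
  | ceil t, x => (⌈t.eval x⌉ : ℝ)
  | scale a t, x => (a : ℝ) * t.eval x
  | comb a b t₁ t₂, x => (a : ℝ) * t₁.eval x + (b : ℝ) * t₂.eval x

/-- All multiplicative edge labels are nonnegative rationals. -/
def Valid {n : ℕ} : ChvatalTree n → Prop
  | leaf _ _ => True
  | ceil t => t.Valid
  | scale a t => 0 ≤ a ∧ t.Valid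
  | comb a b t₁ t₂ => 0 ≤ a ∧ 0 ≤ b ∧ t₁.Valid ∧ t₂.Valid

/-- The ceiling count of the tree. -/
def cc {n : ℕ} : ChvatalTree n → ℕ
  | leaf _ _ => 0
  | ceil t => t.cc + 1
  | scale _ t => t.cc
  | comb _ _ t₁ t₂ => t₁.cc + t₂.cc

/-- All leaves are homogeneous linear functions. -/
def Linear {n : ℕ} : ChvatalTree n → Prop
  | leaf _ c => c = 0
  | ceil t => t.Linear
  | scale _ t => t.Linear
  | comb _ _ t₁ t₂ => t₁.Linear ∧ t₂.Linear

end ChvatalTree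

/-- `f` is an affine Chvátal function. -/
def IsAffineChvatal {n : ℕ} (f : (Fin n → ℝ) → ℝ) : Prop :=
  ∃ T : ChvatalTree n, T.Valid ∧ ∀ x, T.eval x = f x

/-- `f` is a Chvátal function (all leaves homogeneous linear). -/
def IsChvatal {n : ℕ} (f : (Fin n → ℝ) → ℝ) : Prop :=
  ∃ T : ChvatalTree n, T.Valid ∧ T.Linear ∧ ∀ x, T.eval x = f x

/-- `S ⊆ ℝ^n` is the projection of a mixed-integer linear set. -/
def MILPRepresentable {n : ℕ} (S : Set (Fin n → ℝ)) : Prop :=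
  ∃ (m p q : ℕ) (A : Matrix (Fin m) (Fin n) ℚ) (B : Matrix (Fin m) (Fin p) ℚ)
    (C : Matrix (Fin m) (Fin q) ℚ) (d : Fin m → ℚ),
    S = {x | ∃ (y : Fin p → ℝ) (z : Fin q → ℤ), ∀ i : Fin m,
      (d i : ℝ) ≤ (∑ j, (A i j : ℝ) * x j) + (∑ j, (B i j : ℝ) * y j)
        + (∑ j, (C i j : ℝ) * (z j : ℝ))}



section ListLemmas

lemma listBound (l : List ℝ) : ∃ b : ℝ, 0 ≤ b ∧ ∀ a ∈ l, a ≤ b := by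
  induction l with
  | nil => exact ⟨0, le_refl _, by simp⟩
  | cons hd tl ih =>
    obtain ⟨b, hb0, hb⟩ := ih
    refine ⟨max b (max hd 0), le_trans hb0 (le_max_left _ _), ?_⟩
    intro c hc
    rcases List.mem_cons.1 hc with rfl | h
    · exact le_trans (le_max_left c 0) (le_max_right _ _)
    · exact le_trans (hb c h) (le_max_left _ _)

lemma listArgmax {α : Type*} [LinearOrder α] (l : List α) (h : l ≠ []) :
    ∃ m ∈ l, ∀ a ∈ l, a ≤ m := by
  induction l with
  | nil => exact absurd rfl h
  | cons hd tl ih =>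
    rcases eq_or_ne tl [] with rfl | hl
    · refine ⟨hd, List.mem_cons_self, ?_⟩
      intro b hb; simp at hb; exact le_of_eq (by rw [hb])
    · obtain ⟨m, hm, hmax⟩ := ih hl
      rcases le_total hd m with hh | hh
      · refine ⟨m, List.mem_cons_of_mem _ hm, ?_⟩
        intro b hb
        rcases List.mem_cons.1 hb with rfl | h
        · exact hh
        · exact hmax b h
      · refine ⟨hd, List.mem_cons_self, ?_⟩
        intro b hb
        rcases List.mem_cons.1 hb with rfl | h
        · exact le_refl _
        · exact le_trans (hmax b h) hh

lemma listIntBelow (l : List ℝ) : ∃ j : ℤ, ∀ a ∈ l, (j : ℝ) ≤ a := by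
  induction l with
  | nil => exact ⟨0, by simp⟩
  | cons hd tl ih =>
    obtain ⟨j, hj⟩ := ih
    refine ⟨min j ⌊hd⌋, ?_⟩
    intro b hb
    rcases List.mem_cons.1 hb with rfl | h
    · exact le_trans (by exact_mod_cast min_le_right j ⌊b⌋) (Int.floor_le b)
    · exact le_trans (by exact_mod_cast min_le_left j ⌊hd⌋) (hj b h)

lemma listRealBelow (l : List ℝ) : ∃ y : ℝ, ∀ a ∈ l, y ≤ a := by
  obtain ⟨j, hj⟩ := listIntBelow l
  exact ⟨j, hj⟩

end ListLemmas

lemma rat_den_dvd_int (q : ℚ) (D : ℕ) (h : q.den ∣ D) : ∃ m : ℤ, (m : ℚ) = (D : ℚ) * q := by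
  obtain ⟨k, hk⟩ := h
  refine ⟨k * q.num, ?_⟩
  have h1 : ((D : ℚ)) = (q.den : ℚ) * (k : ℚ) := by rw [hk]; push_cast; ring
  rw [h1, mul_comm ((q.den : ℚ)) ((k:ℚ)), mul_assoc, mul_comm ((q.den:ℚ)) q,
    Rat.mul_den_eq_num]
  push_cast; ring

namespace ChvatalTree
variable {n : ℕ}

/-- syntactic coefficient of the last variable -/
def coefLast : ChvatalTree (n+1) → ℚ
  | leaf a _ => a (Fin.last n)
  | ceil t => t.coefLast
  | scale a t => a * t.coefLast
  | comb a b t₁ t₂ => a * t₁.coefLast + b * t₂.coefLast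

/-- all ceiling-node last-variable coefficients have denominator dividing D -/
def DOK (D : ℕ) : ChvatalTree (n+1) → Prop
  | leaf _ _ => True
  | ceil t => t.coefLast.den ∣ D ∧ t.DOK D
  | scale _ t => t.DOK D
  | comb _ _ t₁ t₂ => t₁.DOK D ∧ t₂.DOK D

def dens : ChvatalTree (n+1) → ℕ
  | leaf _ _ => 1
  | ceil t => t.coefLast.den * t.dens
  | scale _ t => t.dens
  | comb _ _ t₁ t₂ => t₁.dens * t₂.dens

lemma dens_pos (t : ChvatalTree (n+1)) : 0 < t.dens := by
  induction t with
  | leaf a c => exact Nat.one_pos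
  | ceil t ih => exact Nat.mul_pos t.coefLast.pos ih
  | scale a t ih => exact ih
  | comb a b t₁ t₂ ih₁ ih₂ => exact Nat.mul_pos ih₁ ih₂

lemma dok_mono {d D : ℕ} (hdvd : d ∣ D) : ∀ t : ChvatalTree (n+1), t.DOK d → t.DOK D
  | leaf _ _, _ => trivial
  | ceil t, h => ⟨dvd_trans h.1 hdvd, dok_mono hdvd t h.2⟩
  | scale _ t, h => dok_mono hdvd t h
  | comb _ _ t₁ t₂, h => ⟨dok_mono hdvd t₁ h.1, dok_mono hdvd t₂ h.2⟩

lemma dok_dens : ∀ t : ChvatalTree (n+1), t.DOK t.dens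
  | leaf _ _ => trivial
  | ceil t => ⟨dvd_mul_right _ _, dok_mono (dvd_mul_left _ _) t (dok_dens t)⟩
  | scale _ t => dok_dens t
  | comb _ _ t₁ t₂ =>
    ⟨dok_mono (dvd_mul_right _ _) t₁ (dok_dens t₁),
     dok_mono (dvd_mul_left _ _) t₂ (dok_dens t₂)⟩

/-- substitute `lastvar := D * j + r`; the `j`-part is tracked separately as `D * coefLast` -/
def substLast (r : ℤ) : ChvatalTree (n+1) → ChvatalTree n
  | leaf a c => leaf (Fin.init a) (c + a (Fin.last n) * r)
  | ceil t => ceil (t.substLast r)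
  | scale a t => scale a (t.substLast r)
  | comb a b t₁ t₂ => comb a b (t₁.substLast r) (t₂.substLast r)

lemma substLast_valid (r : ℤ) : ∀ t : ChvatalTree (n+1), t.Valid → (t.substLast r).Valid
  | leaf _ _, _ => trivial
  | ceil t, h => substLast_valid r t h
  | scale a t, h => ⟨h.1, substLast_valid r t h.2⟩
  | comb a b t₁ t₂, h => ⟨h.1, h.2.1, substLast_valid r t₁ h.2.2.1, substLast_valid r t₂ h.2.2.2⟩

lemma substLast_eval (D : ℕ) (r : ℤ) : ∀ (t : ChvatalTree (n+1)), t.DOK D →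
    ∀ (x : Fin n → ℝ) (j : ℤ),
    t.eval (Fin.snoc x ((D : ℝ) * j + r)) =
      (D : ℝ) * (t.coefLast : ℝ) * j + (t.substLast r).eval x := by
  intro t
  induction t with
  | leaf a c =>
    intro _ x j
    simp only [eval, substLast, coefLast, Fin.sum_univ_castSucc, Fin.snoc_castSucc,
      Fin.snoc_last, Fin.init]
    push_cast
    ring
  | ceil t ih =>
    intro hdok x j
    obtain ⟨m, hm⟩ := rat_den_dvd_int t.coefLast D hdok.1
    have hmR : (m : ℝ) = (D : ℝ) * (t.coefLast : ℝ) := by exact_mod_cast congrArg (Rat.cast : ℚ → ℝ) hm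
    simp only [eval, substLast, coefLast]
    rw [ih hdok.2 x j, ← hmR]
    have h2 : (m : ℝ) * (j : ℝ) + (t.substLast r).eval x
        = (t.substLast r).eval x + ((m * j : ℤ) : ℝ) := by push_cast; ring
    rw [h2, Int.ceil_add_intCast]
    push_cast
    ring
  | scale a t ih =>
    intro hdok x j
    simp only [eval, substLast, coefLast]
    rw [ih hdok x j]
    push_cast
    ring
  | comb a b t₁ t₂ ih₁ ih₂ =>
    intro hdok x j
    simp only [eval, substLast, coefLast]
    rw [ih₁ hdok.1 x j, ih₂ hdok.2 x j]
    push_cast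
    ring

lemma slack (B : ℝ) (hB : 0 ≤ B) : ∀ (t : ChvatalTree (n+1)), t.Valid →
    ∃ C : ℝ, 0 ≤ C ∧ ∀ (x : Fin n → ℝ) (s δ : ℝ), |δ| ≤ B →
      t.eval (Fin.snoc x (s + δ)) ≤ t.eval (Fin.snoc x s) + C := by
  intro t
  induction t with
  | leaf a c =>
    intro _
    refine ⟨|(a (Fin.last n) : ℝ)| * B, by positivity, ?_⟩
    intro x s δ hδ
    have h1 : ∀ v : ℝ, (leaf a c).eval (Fin.snoc x v)
        = (∑ i : Fin n, (a i.castSucc : ℝ) * x i) + (a (Fin.last n) : ℝ) * v + (c : ℝ) := by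
      intro v
      simp only [eval, Fin.sum_univ_castSucc, Fin.snoc_castSucc, Fin.snoc_last]
    rw [h1, h1]
    have : (a (Fin.last n) : ℝ) * (s + δ) = (a (Fin.last n) : ℝ) * s + (a (Fin.last n) : ℝ) * δ := by ring
    have h2 : (a (Fin.last n) : ℝ) * δ ≤ |(a (Fin.last n) : ℝ)| * B := by
      calc (a (Fin.last n) : ℝ) * δ ≤ |(a (Fin.last n) : ℝ) * δ| := le_abs_self _
        _ = |(a (Fin.last n) : ℝ)| * |δ| := abs_mul _ _
        _ ≤ |(a (Fin.last n) : ℝ)| * B := by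
            exact mul_le_mul_of_nonneg_left hδ (abs_nonneg _)
    rw [this]; linarith
  | ceil t ih =>
    intro hv
    obtain ⟨C, hC0, hC⟩ := ih hv
    refine ⟨C + 1, by linarith, ?_⟩
    intro x s δ hδ
    simp only [eval]
    have h1 : ⌈t.eval (Fin.snoc x (s+δ))⌉ ≤ ⌈t.eval (Fin.snoc x s) + C⌉ :=
      Int.ceil_le_ceil (hC x s δ hδ)
    have h2 : ((⌈t.eval (Fin.snoc x s) + C⌉ : ℤ) : ℝ) ≤ (⌈t.eval (Fin.snoc x s)⌉ : ℝ) + ⌈C⌉ := by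
      exact_mod_cast Int.ceil_add_le _ _
    have h3 : ((⌈C⌉ : ℤ) : ℝ) ≤ C + 1 := le_of_lt (Int.ceil_lt_add_one C)
    calc ((⌈t.eval (Fin.snoc x (s+δ))⌉ : ℤ) : ℝ) ≤ ((⌈t.eval (Fin.snoc x s) + C⌉ : ℤ) : ℝ) := by
          exact_mod_cast h1
      _ ≤ (⌈t.eval (Fin.snoc x s)⌉ : ℝ) + ⌈C⌉ := h2
      _ ≤ ((⌈t.eval (Fin.snoc x s)⌉ : ℤ) : ℝ) + (C + 1) := by linarith
  | scale a t ih =>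
    intro hv
    obtain ⟨C, hC0, hC⟩ := ih hv.2
    have ha : (0:ℝ) ≤ (a : ℝ) := by exact_mod_cast hv.1
    refine ⟨a * C, by positivity, ?_⟩
    intro x s δ hδ
    simp only [eval]
    have := mul_le_mul_of_nonneg_left (hC x s δ hδ) ha
    linarith
  | comb a b t₁ t₂ ih₁ ih₂ =>
    intro hv
    obtain ⟨C₁, hC₁0, hC₁⟩ := ih₁ hv.2.2.1
    obtain ⟨C₂, hC₂0, hC₂⟩ := ih₂ hv.2.2.2
    have ha : (0:ℝ) ≤ (a : ℝ) := by exact_mod_cast hv.1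
    have hb : (0:ℝ) ≤ (b : ℝ) := by exact_mod_cast hv.2.1
    refine ⟨a * C₁ + b * C₂, by positivity, ?_⟩
    intro x s δ hδ
    simp only [eval]
    have h1 := mul_le_mul_of_nonneg_left (hC₁ x s δ hδ) ha
    have h2 := mul_le_mul_of_nonneg_left (hC₂ x s δ hδ) hb
    linarith

lemma slack_sys (B : ℝ) (hB : 0 ≤ B) (sys : List (ChvatalTree (n+1)))
    (hv : ∀ f ∈ sys, f.Valid) :
    ∃ C : ℝ, 0 ≤ C ∧ ∀ f ∈ sys, ∀ (x : Fin n → ℝ) (s δ : ℝ), |δ| ≤ B →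
      f.eval (Fin.snoc x (s + δ)) ≤ f.eval (Fin.snoc x s) + C := by
  induction sys with
  | nil => exact ⟨0, le_refl _, by simp⟩
  | cons f tl ih =>
    obtain ⟨C, hC0, hC⟩ := ih (fun g hg => hv g (List.mem_cons_of_mem _ hg))
    obtain ⟨Cf, hCf0, hCf⟩ := slack B hB f (hv f (List.mem_cons_self))
    refine ⟨max C Cf, le_trans hC0 (le_max_left _ _), ?_⟩
    intro g hg x s δ hδ
    rcases List.mem_cons.1 hg with rfl | hg
    · exact le_trans (hCf x s δ hδ) (by have := le_max_right C Cf; linarith)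
    · exact le_trans (hC g hg x s δ hδ) (by have := le_max_left C Cf; linarith)

end ChvatalTree
section ElimZ
open ChvatalTree
variable {n : ℕ}

lemma le_foldr_max (l : List ℝ) (c : ℝ) :
    c ≤ l.foldr max c ∧ ∀ a ∈ l, a ≤ l.foldr max c := by
  induction l with
  | nil => exact ⟨le_refl _, by simp⟩
  | cons hd tl ih =>
    refine ⟨le_trans ih.1 (by simp [List.foldr]), ?_⟩
    intro a ha
    rcases List.mem_cons.1 ha with rfl | ha
    · simp [List.foldr]
    · exact le_trans (ih.2 a ha) (by simp [List.foldr])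

def zeroPart (L : List (ℚ × ChvatalTree n)) : List (ChvatalTree n) :=
  L.filterMap fun p => if p.1 = 0 then some p.2 else none

def pairPart (L : List (ℚ × ChvatalTree n)) : List (ChvatalTree n) :=
  L.flatMap fun s => L.filterMap fun t =>
    if s.1 < 0 ∧ 0 < t.1 then
      some (comb t.1 1 (ceil (scale (-s.1)⁻¹ s.2)) t.2) else none

def elimZ (L : List (ℚ × ChvatalTree n)) : List (ChvatalTree n) :=
  zeroPart L ++ pairPart L

lemma mem_zeroPart {L : List (ℚ × ChvatalTree n)} {g : ChvatalTree n} :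
    g ∈ zeroPart L ↔ ∃ p ∈ L, p.1 = 0 ∧ p.2 = g := by
  simp only [zeroPart, List.mem_filterMap]
  constructor
  · rintro ⟨p, hp, he⟩
    by_cases h : p.1 = 0
    · rw [if_pos h] at he; exact ⟨p, hp, h, Option.some_injective _ he⟩
    · rw [if_neg h] at he; exact absurd he (by simp)
  · rintro ⟨p, hp, h0, rfl⟩; exact ⟨p, hp, by rw [if_pos h0]⟩

lemma mem_pairPart {L : List (ℚ × ChvatalTree n)} {g : ChvatalTree n} :
    g ∈ pairPart L ↔ ∃ s ∈ L, ∃ t ∈ L, s.1 < 0 ∧ 0 < t.1 ∧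
      g = comb t.1 1 (ceil (scale (-s.1)⁻¹ s.2)) t.2 := by
  simp only [pairPart, List.mem_flatMap, List.mem_filterMap]
  constructor
  · rintro ⟨s, hs, t, ht, he⟩
    by_cases h : s.1 < 0 ∧ 0 < t.1
    · rw [if_pos h] at he
      exact ⟨s, hs, t, ht, h.1, h.2, (Option.some_injective _ he).symm⟩
    · rw [if_neg h] at he; exact absurd he (by simp)
  · rintro ⟨s, hs, t, ht, h1, h2, rfl⟩
    exact ⟨s, hs, t, ht, by rw [if_pos ⟨h1, h2⟩]⟩

lemma elimZ_valid {L : List (ℚ × ChvatalTree n)} (hL : ∀ p ∈ L, (p.2).Valid) :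
    ∀ g ∈ elimZ L, g.Valid := by
  intro g hg
  rcases List.mem_append.1 hg with h | h
  · obtain ⟨p, hp, _, rfl⟩ := mem_zeroPart.1 h
    exact hL p hp
  · obtain ⟨s, hs, t, ht, h1, h2, rfl⟩ := mem_pairPart.1 h
    exact ⟨le_of_lt h2, zero_le_one,
      ⟨inv_nonneg.2 (by linarith), hL s hs⟩, hL t ht⟩

lemma pair_eval {s t : ℚ × ChvatalTree n} (x : Fin n → ℝ) :
    (comb t.1 1 (ceil (scale (-s.1)⁻¹ s.2)) t.2).eval x
      = (t.1 : ℝ) * (⌈((-s.1 : ℚ) : ℝ)⁻¹ * s.2.eval x⌉ : ℤ) + t.2.eval x := by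
  simp only [eval]
  push_cast
  ring

lemma elimZ_exact {L : List (ℚ × ChvatalTree n)} (x : Fin n → ℝ) :
    (∀ g ∈ elimZ L, g.eval x ≤ 0) ↔
    ∃ j : ℤ, ∀ p ∈ L, (p.1 : ℝ) * j + p.2.eval x ≤ 0 := by
  constructor
  · intro H
    by_cases hneg : ∃ s ∈ L, s.1 < 0
    · -- take j = max of the lower-bound ceilings
      obtain ⟨s₀, hs₀⟩ := hneg
      set l := (L.filter (fun p => decide (p.1 < 0))).map
        (fun s => ⌈((-s.1 : ℚ) : ℝ)⁻¹ * s.2.eval x⌉) with hl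
      have hlne : l ≠ [] := by
        simp only [hl, ne_eq, List.map_eq_nil_iff, List.filter_eq_nil_iff]
        push_neg
        exact ⟨s₀, hs₀.1, by simpa using hs₀.2⟩
      obtain ⟨m, hml, hmax⟩ := listArgmax l hlne
      obtain ⟨sm, hsm, hsme⟩ := List.mem_map.1 hml
      have hsmL : sm ∈ L := (List.mem_filter.1 hsm).1
      have hsmneg : sm.1 < 0 := by simpa using (List.mem_filter.1 hsm).2
      refine ⟨m, ?_⟩
      intro p hp
      rcases lt_trichotomy p.1 0 with hc | hc | hc
      · -- lower bound rows
        have hpl : ⌈((-p.1 : ℚ) : ℝ)⁻¹ * p.2.eval x⌉ ∈ l := by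
          rw [hl]
          exact List.mem_map.2 ⟨p, List.mem_filter.2 ⟨hp, by simpa using hc⟩, rfl⟩
        have h1 : ⌈((-p.1 : ℚ) : ℝ)⁻¹ * p.2.eval x⌉ ≤ m := hmax _ hpl
        have h2 : ((-p.1 : ℚ) : ℝ)⁻¹ * p.2.eval x ≤ (m : ℝ) :=
          le_trans (Int.le_ceil _) (by exact_mod_cast h1)
        have hpos : (0:ℝ) < ((-p.1 : ℚ) : ℝ) := by
          have : (0:ℚ) < -p.1 := by linarith
          exact_mod_cast this
        rw [inv_mul_eq_div, div_le_iff₀ hpos] at h2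
        have : ((p.1 : ℚ) : ℝ) = -((-p.1 : ℚ) : ℝ) := by push_cast; ring
        rw [this]
        nlinarith [h2]
      · rw [hc]
        have : p.2 ∈ elimZ L :=
          List.mem_append.2 (Or.inl (mem_zeroPart.2 ⟨p, hp, hc, rfl⟩))
        have := H _ this
        simp only [Rat.cast_zero]
        linarith
      · -- upper bound rows: use the pair with sm
        have hgm : (comb p.1 1 (ceil (scale (-sm.1)⁻¹ sm.2)) p.2) ∈ elimZ L :=
          List.mem_append.2 (Or.inr (mem_pairPart.2 ⟨sm, hsmL, p, hp, hsmneg, hc, rfl⟩))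
        have h1 := H _ hgm
        rw [pair_eval x] at h1
        rw [hsme] at h1
        exact h1
    · -- no lower bounds: push j very negative
      push_neg at hneg
      obtain ⟨j, hj⟩ := listIntBelow ((L.filter (fun p => decide (0 < p.1))).map
        (fun t => -(t.2.eval x) / (t.1 : ℝ)))
      refine ⟨j, ?_⟩
      intro p hp
      rcases lt_trichotomy p.1 0 with hc | hc | hc
      · exact absurd hc (not_lt.2 (hneg p hp))
      · rw [hc]
        have : p.2 ∈ elimZ L :=
          List.mem_append.2 (Or.inl (mem_zeroPart.2 ⟨p, hp, hc, rfl⟩))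
        have := H _ this
        simp only [Rat.cast_zero]
        linarith
      · have hmem : -(p.2.eval x) / (p.1 : ℝ) ∈ (L.filter (fun p => decide (0 < p.1))).map
            (fun t => -(t.2.eval x) / (t.1 : ℝ)) :=
          List.mem_map.2 ⟨p, List.mem_filter.2 ⟨hp, by simpa using hc⟩, rfl⟩
        have h1 := hj _ hmem
        have hpos : (0:ℝ) < ((p.1 : ℚ) : ℝ) := by exact_mod_cast hc
        rw [le_div_iff₀ hpos] at h1
        nlinarith [h1]
  · rintro ⟨j, hj⟩ g hg
    rcases List.mem_append.1 hg with h | h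
    · obtain ⟨p, hp, h0, rfl⟩ := mem_zeroPart.1 h
      have := hj p hp
      rw [h0] at this
      simpa using this
    · obtain ⟨s, hs, t, ht, h1, h2, rfl⟩ := mem_pairPart.1 h
      rw [pair_eval x]
      have hspos : (0:ℝ) < ((-s.1 : ℚ) : ℝ) := by
        have : (0:ℚ) < -s.1 := by linarith
        exact_mod_cast this
      have hcs := hj s hs
      have hcs' : ((-s.1 : ℚ) : ℝ)⁻¹ * s.2.eval x ≤ (j : ℝ) := by
        rw [inv_mul_eq_div, div_le_iff₀ hspos]
        have : ((s.1 : ℚ) : ℝ) = -((-s.1 : ℚ) : ℝ) := by push_cast; ring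
        rw [this] at hcs
        nlinarith [hcs]
      have hceil : (⌈((-s.1 : ℚ) : ℝ)⁻¹ * s.2.eval x⌉ : ℤ) ≤ j := Int.ceil_le.2 hcs'
      have htpos : (0:ℝ) < ((t.1 : ℚ) : ℝ) := by exact_mod_cast h2
      have h3 : (t.1 : ℝ) * (⌈((-s.1 : ℚ) : ℝ)⁻¹ * s.2.eval x⌉ : ℤ) ≤ (t.1 : ℝ) * (j:ℝ) :=
        mul_le_mul_of_nonneg_left (by exact_mod_cast hceil) (le_of_lt htpos)
      have h4 := hj t ht
      linarith

lemma elimZ_sound {L : List (ℚ × ChvatalTree n)} (ε : ℝ) (hε : 0 ≤ ε) :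
    ∃ κ : ℝ, 0 ≤ κ ∧ ∀ (x : Fin n → ℝ) (j : ℤ),
      (∀ p ∈ L, (p.1 : ℝ) * j + p.2.eval x ≤ ε) → ∀ g ∈ elimZ L, g.eval x ≤ κ := by
  set Cm := (L.map (fun p => ((p.1 : ℚ) : ℝ))).foldr max 0 with hCm
  set Dm := (L.map (fun p => (((-p.1 : ℚ) : ℝ))⁻¹)).foldr max 0 with hDm
  have hCm0 : 0 ≤ Cm := (le_foldr_max _ 0).1
  have hDm0 : 0 ≤ Dm := (le_foldr_max _ 0).1
  refine ⟨ε + Cm * (Dm * ε + 1), by positivity, ?_⟩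
  intro x j hfeas g hg
  rcases List.mem_append.1 hg with h | h
  · obtain ⟨p, hp, h0, rfl⟩ := mem_zeroPart.1 h
    have := hfeas p hp
    rw [h0] at this
    simp only [Rat.cast_zero, zero_mul, zero_add] at this
    nlinarith [mul_nonneg hCm0 (by positivity : (0:ℝ) ≤ Dm * ε + 1)]
  · obtain ⟨s, hs, t, ht, h1, h2, rfl⟩ := mem_pairPart.1 h
    rw [pair_eval x]
    have hspos : (0:ℝ) < ((-s.1 : ℚ) : ℝ) := by
      have : (0:ℚ) < -s.1 := by linarith
      exact_mod_cast this
    have htpos : (0:ℝ) < ((t.1 : ℚ) : ℝ) := by exact_mod_cast h2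
    have hcs := hfeas s hs
    -- (-s.1)⁻¹ * c_s ≤ (-s.1)⁻¹ * ε + j
    have hstep : ((-s.1 : ℚ) : ℝ)⁻¹ * s.2.eval x ≤ ((-s.1 : ℚ) : ℝ)⁻¹ * ε + (j : ℝ) := by
      have he : ((s.1 : ℚ) : ℝ) = -((-s.1 : ℚ) : ℝ) := by push_cast; ring
      rw [he] at hcs
      have h3 : s.2.eval x ≤ ε + ((-s.1 : ℚ) : ℝ) * j := by nlinarith
      have h4 := mul_le_mul_of_nonneg_left h3 (le_of_lt (inv_pos.2 hspos))
      have h5 : ((-s.1 : ℚ) : ℝ)⁻¹ * (ε + ((-s.1 : ℚ) : ℝ) * (j:ℝ))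
          = ((-s.1 : ℚ) : ℝ)⁻¹ * ε + (j : ℝ) := by
        rw [mul_add, inv_mul_cancel_left₀ (ne_of_gt hspos)]
      rw [h5] at h4
      exact h4
    have hceil : ((⌈((-s.1 : ℚ) : ℝ)⁻¹ * s.2.eval x⌉ : ℤ) : ℝ)
        ≤ ((-s.1 : ℚ) : ℝ)⁻¹ * ε + (j : ℝ) + 1 := by
      calc ((⌈((-s.1 : ℚ) : ℝ)⁻¹ * s.2.eval x⌉ : ℤ) : ℝ)
          ≤ ((⌈((-s.1 : ℚ) : ℝ)⁻¹ * ε + (j : ℝ)⌉ : ℤ) : ℝ) := by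
            exact_mod_cast Int.ceil_le_ceil hstep
        _ ≤ ((-s.1 : ℚ) : ℝ)⁻¹ * ε + (j : ℝ) + 1 := le_of_lt (Int.ceil_lt_add_one _)
    have hmul : (t.1 : ℝ) * ((⌈((-s.1 : ℚ) : ℝ)⁻¹ * s.2.eval x⌉ : ℤ) : ℝ)
        ≤ (t.1 : ℝ) * (((-s.1 : ℚ) : ℝ)⁻¹ * ε + (j : ℝ) + 1) :=
      mul_le_mul_of_nonneg_left hceil (le_of_lt htpos)
    have hct := hfeas t ht
    -- bound the extra terms by Cm, Dm
    have htCm : ((t.1 : ℚ) : ℝ) ≤ Cm := by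
      exact (le_foldr_max _ 0).2 _ (List.mem_map.2 ⟨t, ht, rfl⟩)
    have hsDm : ((-s.1 : ℚ) : ℝ)⁻¹ ≤ Dm := by
      exact (le_foldr_max _ 0).2 _ (List.mem_map.2 ⟨s, hs, rfl⟩)
    have hfin : ((t.1 : ℚ) : ℝ) * (((-s.1 : ℚ) : ℝ)⁻¹ * ε + 1) ≤ Cm * (Dm * ε + 1) := by
      have h6 : ((-s.1 : ℚ) : ℝ)⁻¹ * ε + 1 ≤ Dm * ε + 1 := by nlinarith
      have h7 : (0:ℝ) ≤ ((-s.1 : ℚ) : ℝ)⁻¹ * ε + 1 := by positivity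
      nlinarith
    nlinarith
  
end ElimZ
section Gadgets
open ChvatalTree
variable {n : ℕ}

def sumCeil (M k : ℚ) (l : List (ChvatalTree n)) : ChvatalTree n :=
  l.foldr (fun t acc => comb 1 1 (ceil (scale M⁻¹ t)) acc) (leaf 0 (-k))

lemma sumCeil_valid (M k : ℚ) (hM : 0 ≤ M) (l : List (ChvatalTree n))
    (hl : ∀ t ∈ l, t.Valid) : (sumCeil M k l).Valid := by
  induction l with
  | nil => trivial
  | cons hd tl ih =>
    exact ⟨zero_le_one, zero_le_one,
      ⟨inv_nonneg.2 hM, hl hd (List.mem_cons_self)⟩,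
      ih (fun t ht => hl t (List.mem_cons_of_mem _ ht))⟩

lemma sumCeil_eval (M k : ℚ) (l : List (ChvatalTree n)) (x : Fin n → ℝ) :
    (sumCeil M k l).eval x
      = (l.map (fun t => ((⌈((M : ℝ))⁻¹ * t.eval x⌉ : ℤ) : ℝ))).sum - (k : ℝ) := by
  induction l with
  | nil => simp [sumCeil, eval]
  | cons hd tl ih =>
    have hunfold : sumCeil M k (hd :: tl) = comb 1 1 (ceil (scale M⁻¹ hd)) (sumCeil M k tl) := rfl
    rw [hunfold]
    simp only [eval, List.map_cons, List.sum_cons]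
    rw [ih]
    push_cast
    ring

lemma listSumLower (l : List ℝ) (h : ∀ a ∈ l, (1:ℝ) ≤ a) : (l.length : ℝ) ≤ l.sum := by
  induction l with
  | nil => simp
  | cons hd tl ih =>
    simp only [List.length_cons, List.sum_cons]
    push_cast
    have h1 := h hd (List.mem_cons_self)
    have h2 := ih (fun a ha => h a (List.mem_cons_of_mem _ ha))
    linarith

lemma listSumUpper (l : List ℝ) (B : ℝ) (h : ∀ a ∈ l, a ≤ B) : l.sum ≤ (l.length : ℝ) * B := by
  induction l with
  | nil => simp
  | cons hd tl ih =>
    simp only [List.length_cons, List.sum_cons]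
    push_cast
    have h1 := h hd (List.mem_cons_self)
    have h2 := ih (fun a ha => h a (List.mem_cons_of_mem _ ha))
    nlinarith [h2]

def castZ {k : ℕ} (z : Fin k → ℤ) : Fin k → ℝ := fun i => (z i : ℝ)

lemma castZ_snoc {k : ℕ} (z : Fin k → ℤ) (w : ℤ) :
    castZ (Fin.snoc z w) = Fin.snoc (castZ z) ((w : ℝ)) := by
  funext i
  refine Fin.lastCases ?_ ?_ i
  · simp [castZ, Fin.snoc_last]
  · intro i; simp [castZ, Fin.snoc_castSucc]

lemma append_empty (x : Fin n → ℝ) (e : Fin 0 → ℝ) : Fin.append x e = x := by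
  funext i
  have h2 : Fin.append x e (Fin.castAdd 0 i) = x i := Fin.append_left x e i
  have h3 : Fin.castAdd 0 i = i := Fin.ext (by simp)
  rw [h3] at h2
  exact h2

end Gadgets
section Bridge
open ChvatalTree

/-- assemble an evaluation vector from real `x` and integer `z` -/
def XV {n q : ℕ} (x : Fin n → ℝ) (z : Fin q → ℤ) : Fin (n + q) → ℝ :=
  Fin.append x (castZ z)

lemma XV_snoc {n q : ℕ} (x : Fin n → ℝ) (z' : Fin q → ℤ) (w : ℤ) :
    (XV x (Fin.snoc z' w) : Fin (n + (q+1)) → ℝ)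
      = Fin.snoc (XV x z' : Fin (n+q) → ℝ) ((w : ℝ)) := by
  show Fin.append x (castZ (Fin.snoc z' w)) = _
  rw [castZ_snoc, Fin.append_snoc]
  rfl

lemma bridge {n q : ℕ} (f : ChvatalTree ((n + q) + 1)) (D : ℕ) (hdok : f.DOK D)
    (x : Fin n → ℝ) (z' : Fin q → ℤ) (j r : ℤ) :
    f.eval (XV x (Fin.snoc z' ((D : ℤ) * j + r)) : Fin (n + (q+1)) → ℝ) =
      ((D : ℝ) * (f.coefLast : ℝ)) * j + (f.substLast r).eval (XV x z') := by
  rw [XV_snoc]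
  have h2 : ((((D : ℤ) * j + r : ℤ)) : ℝ) = (D : ℝ) * (j : ℝ) + (r : ℝ) := by push_cast; ring
  rw [h2]
  exact substLast_eval D r f hdok _ j

/-- slack transfer: changing the residue of the last integer variable changes
feasibility only by a bounded amount -/
lemma residue_shift {n q : ℕ} (sys : List (ChvatalTree (n + (q+1))))
    (hv : ∀ f ∈ sys, f.Valid) (D : ℕ) (hDpos : 0 < D)
    (hdok : ∀ f ∈ sys, ChvatalTree.DOK D f) :
    ∃ C : ℝ, 0 ≤ C ∧ ∀ (ε : ℝ) (x : Fin n → ℝ) (z : Fin (q+1) → ℤ),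
      (∀ f ∈ sys, f.eval (XV x z) ≤ ε) →
      ∀ r : ℤ, 0 ≤ r → r < D →
        ∀ f ∈ sys, f.eval (XV x (Fin.snoc (Fin.init z)
            ((D : ℤ) * (z (Fin.last q) / D) + r)) : Fin (n + (q+1)) → ℝ) ≤ ε + C := by
  obtain ⟨C, hC0, hC⟩ := ChvatalTree.slack_sys (D : ℝ) (by positivity)
    (sys : List (ChvatalTree ((n+q)+1))) hv
  refine ⟨C, hC0, ?_⟩
  intro ε x z hz r hr0 hrD f hf
  set w := z (Fin.last q) with hw
  have hsplit : (D : ℤ) * (w / D) + r = w + (r - w % D) := by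
    have := Int.mul_ediv_add_emod w (D : ℤ)
    omega
  rw [hsplit, XV_snoc]
  have hcast : ((w + (r - w % D) : ℤ) : ℝ) = (w : ℝ) + ((r - w % D : ℤ) : ℝ) := by push_cast; ring
  rw [hcast]
  have hmod0 : (0:ℤ) ≤ w % D := Int.emod_nonneg w (by positivity)
  have hmodD : w % D < D := Int.emod_lt_of_pos w (by exact_mod_cast hDpos)
  have hδ : |((r - w % D : ℤ) : ℝ)| ≤ (D : ℝ) := by
    rw [abs_le]
    constructor
    · have : -(D:ℤ) ≤ r - w % D := by omega
      exact_mod_cast this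
    · have : r - w % D ≤ (D:ℤ) := by omega
      exact_mod_cast this
  have hs := hC f hf (XV x (Fin.init z)) ((w : ℝ)) _ hδ
  refine le_trans hs ?_
  have : Fin.snoc (XV x (Fin.init z) : Fin (n+q) → ℝ) ((w:ℝ))
      = (XV x z : Fin (n + (q+1)) → ℝ) := by
    rw [← XV_snoc, hw, Fin.snoc_init_self]
  rw [this]
  have := hz f hf
  linarith

end Bridge
open ChvatalTree in
lemma lemB {n : ℕ} : ∀ (q : ℕ) (sys : List (ChvatalTree (n + q))),
    (∀ f ∈ sys, f.Valid) →
    ∃ out : List (ChvatalTree n),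
      (∀ g ∈ out, g.Valid) ∧
      (∀ x : Fin n → ℝ,
        (∀ g ∈ out, g.eval x ≤ 0) ↔
        ∃ z : Fin q → ℤ, ∀ f ∈ sys, f.eval (XV x z) ≤ 0) ∧
      (∀ ε : ℝ, 0 ≤ ε → ∃ κ : ℝ,
        ∀ x : Fin n → ℝ,
          (∃ z : Fin q → ℤ, ∀ f ∈ sys, f.eval (XV x z) ≤ ε) →
          ∀ g ∈ out, g.eval x ≤ κ) := by
  intro q
  induction q with
  | zero =>
    intro sys hv
    refine ⟨sys, hv, ?_, ?_⟩
    · intro x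
      constructor
      · intro H
        refine ⟨fun i => 0, fun f hf => ?_⟩
        have he : (XV x (fun _ : Fin 0 => (0:ℤ)) : Fin (n+0) → ℝ) = x := append_empty _ _
        rw [he]; exact H f hf
      · rintro ⟨z, hz⟩ g hg
        have := hz g hg
        rwa [show (XV x z : Fin (n+0) → ℝ) = x from append_empty _ _] at this
    · intro ε hε
      refine ⟨ε, ?_⟩
      rintro x ⟨z, hz⟩ g hg
      have := hz g hg
      rwa [show (XV x z : Fin (n+0) → ℝ) = x from append_empty _ _] at this
  | succ q ih =>
    intro sys hv
    classical
    set D : ℕ := (sys.map ChvatalTree.dens).prod with hD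
    have hDpos : 0 < D := by
      rw [hD]
      apply List.prod_pos
      intro a ha
      obtain ⟨f, _, rfl⟩ := List.mem_map.1 ha
      exact ChvatalTree.dens_pos f
    have hD1 : 1 ≤ D := hDpos
    have hdok : ∀ f ∈ sys, ChvatalTree.DOK D f := fun f hf =>
      ChvatalTree.dok_mono (List.dvd_prod (List.mem_map.2 ⟨f, hf, rfl⟩)) f
        (ChvatalTree.dok_dens f)
    -- residual subsystems
    set sub : ℤ → List (ℚ × ChvatalTree (n + q)) :=
      fun r => sys.map (fun f : ChvatalTree ((n+q)+1) =>
        ((D : ℚ) * f.coefLast, f.substLast r)) with hsub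
    have hsubval : ∀ r : ℤ, ∀ p ∈ sub r, (p.2).Valid := by
      intro r p hp
      obtain ⟨f, hf, rfl⟩ := List.mem_map.1 hp
      exact ChvatalTree.substLast_valid r f (hv f hf)
    -- the key pointwise identity
    have hkey : ∀ (r : ℤ) (x : Fin n → ℝ) (z' : Fin q → ℤ) (j : ℤ) (p : ℚ × ChvatalTree (n+q)),
        p ∈ sub r → ∃ f ∈ sys, p = ((D : ℚ) * f.coefLast, f.substLast r) ∧
          (p.1 : ℝ) * (j : ℝ) + p.2.eval (XV x z')
            = f.eval (XV x (Fin.snoc z' ((D : ℤ) * j + r)) : Fin (n + (q+1)) → ℝ) := by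
      intro r x z' j p hp
      obtain ⟨f, hf, rfl⟩ := List.mem_map.1 hp
      refine ⟨f, hf, rfl, ?_⟩
      rw [bridge f D (hdok f hf) x z' j r]
      push_cast
      ring
    -- recursive elimination for each residue
    have hrec : ∀ r : Fin D, ∃ out_r : List (ChvatalTree n),
        (∀ g ∈ out_r, g.Valid) ∧
        (∀ x : Fin n → ℝ,
          (∀ g ∈ out_r, g.eval x ≤ 0) ↔
          ∃ z' : Fin q → ℤ, ∀ g ∈ elimZ (sub ((r : ℕ) : ℤ)), g.eval (XV x z') ≤ 0) ∧
        (∀ ε : ℝ, 0 ≤ ε → ∃ κ : ℝ,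
          ∀ x : Fin n → ℝ,
            (∃ z' : Fin q → ℤ, ∀ g ∈ elimZ (sub ((r : ℕ) : ℤ)), g.eval (XV x z') ≤ ε) →
            ∀ g ∈ out_r, g.eval x ≤ κ) :=
      fun r => ih (elimZ (sub ((r : ℕ) : ℤ))) (elimZ_valid (hsubval _))
    choose out hov hoiff hosnd using hrec
    -- slack transfer constant
    obtain ⟨C, hC0, hshift⟩ := residue_shift sys hv D hDpos hdok
    -- uniform bound M on the recursive outputs over the whole set S
    have hk2 : ∀ r : Fin D, ∃ κ₂ : ℝ, 0 ≤ κ₂ ∧ ∀ (X : Fin (n+q) → ℝ) (j : ℤ),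
        (∀ p ∈ sub ((r : ℕ) : ℤ), (p.1 : ℝ) * j + p.2.eval X ≤ 0 + C) →
        ∀ g ∈ elimZ (sub ((r : ℕ) : ℤ)), g.eval X ≤ κ₂ :=
      fun r => elimZ_sound (0 + C) (by linarith)
    choose κ₂ hκ₂0 hκ₂ using hk2
    have hk3 : ∀ r : Fin D, ∃ κ₃ : ℝ, ∀ x : Fin n → ℝ,
        (∃ z' : Fin q → ℤ, ∀ g ∈ elimZ (sub ((r : ℕ) : ℤ)), g.eval (XV x z') ≤ κ₂ r) →
        ∀ g ∈ out r, g.eval x ≤ κ₃ :=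
      fun r => hosnd r (κ₂ r) (hκ₂0 r)
    choose κ₃ hκ₃ using hk3
    set Mr : ℝ := ((List.finRange D).map κ₃).foldr max 1 with hMr
    obtain ⟨M, hMgt⟩ := exists_rat_gt Mr
    have hM1 : (1:ℝ) ≤ (M:ℝ) := le_of_lt (lt_of_le_of_lt (le_foldr_max _ 1).1 hMgt)
    have hMpos : (0:ℝ) < (M:ℝ) := by linarith
    have hMq0 : (0:ℚ) ≤ M := by exact_mod_cast le_of_lt hMpos
    have hMκ : ∀ r : Fin D, κ₃ r ≤ (M:ℝ) := fun r =>
      le_of_lt (lt_of_le_of_lt ((le_foldr_max _ 1).2 _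
        (List.mem_map.2 ⟨r, List.mem_finRange r, rfl⟩)) hMgt)
    -- the output list
    set OUT : List (ChvatalTree n) :=
      ((Finset.univ : Finset (∀ r : Fin D, Fin (out r).length))).toList.map
        (fun c => sumCeil M ((D:ℚ) - 1)
          ((List.finRange D).map (fun r => (out r).get (c r)))) with hOUT
    -- feasibility transfer: if x is ε-feasible then every residue system is (ε+C)-feasible,
    -- hence every recursive output is bounded
    have htrans : ∀ (ε : ℝ) (x : Fin n → ℝ) (z : Fin (q+1) → ℤ),
        (∀ f ∈ sys, f.eval (XV x z) ≤ ε) →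
        ∀ r : Fin D, ∀ p ∈ sub ((r : ℕ) : ℤ),
          (p.1 : ℝ) * ((z (Fin.last q) / D : ℤ) : ℝ) + p.2.eval (XV x (Fin.init z)) ≤ ε + C := by
      intro ε x z hz r p hp
      obtain ⟨f, hf, hpe, hpv⟩ := hkey ((r : ℕ) : ℤ) x (Fin.init z) (z (Fin.last q) / D) p hp
      rw [hpv]
      exact hshift ε x z hz ((r : ℕ) : ℤ) (by positivity) (by exact_mod_cast r.2) f hf
    have hboundM : ∀ (x : Fin n → ℝ) (z : Fin (q+1) → ℤ),
        (∀ f ∈ sys, f.eval (XV x z) ≤ 0) →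
        ∀ r : Fin D, ∀ g ∈ out r, g.eval x ≤ (M : ℝ) := by
      intro x z hz r g hg
      have h1 := htrans 0 x z hz r
      have h2 : ∀ g' ∈ elimZ (sub ((r : ℕ) : ℤ)), g'.eval (XV x (Fin.init z)) ≤ κ₂ r :=
        hκ₂ r (XV x (Fin.init z)) _ h1
      exact le_trans (hκ₃ r x ⟨Fin.init z, h2⟩ g hg) (hMκ r)
    refine ⟨OUT, ?_, ?_, ?_⟩
    · -- validity
      intro g hg
      rw [hOUT] at hg
      obtain ⟨c, _, rfl⟩ := List.mem_map.1 hg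
      apply sumCeil_valid _ _ hMq0
      intro t ht
      obtain ⟨r, _, rfl⟩ := List.mem_map.1 ht
      exact hov r _ (List.get_mem _ (c r))
    · -- the set equivalence
      intro x
      constructor
      · -- OUT ≤ 0 → ∃ z feasible
        intro HOUT
        by_contra hno
        push_neg at hno
        have hfail : ∀ r : Fin D, ∃ i : Fin (out r).length, 0 < ((out r).get i).eval x := by
          intro r
          by_contra hall
          push_neg at hall
          have hall' : ∀ h ∈ out r, h.eval x ≤ 0 := by
            intro h hh
            obtain ⟨i, rfl⟩ := List.mem_iff_get.1 hh
            exact hall i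
          obtain ⟨z', hz'⟩ := (hoiff r x).1 hall'
          obtain ⟨j, hj⟩ := (elimZ_exact (XV x z')).1 hz'
          obtain ⟨f0, hf0, hf0pos⟩ := hno (Fin.snoc z' ((D : ℤ) * j + ((r : ℕ) : ℤ)))
          have hb := bridge f0 D (hdok f0 hf0) x z' j ((r : ℕ) : ℤ)
          have hjf := hj ((D : ℚ) * f0.coefLast, f0.substLast ((r : ℕ) : ℤ))
            (List.mem_map.2 ⟨f0, hf0, rfl⟩)
          simp only at hjf
          have hcast : (((D : ℚ) * f0.coefLast : ℚ) : ℝ) = (D : ℝ) * (f0.coefLast : ℝ) := by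
            push_cast; ring
          rw [hcast] at hjf
          rw [← hb] at hjf
          linarith
        choose c hc using hfail
        have hgOUT : sumCeil M ((D:ℚ) - 1)
            ((List.finRange D).map (fun r => (out r).get (c r))) ∈ OUT := by
          rw [hOUT]
          exact List.mem_map.2 ⟨c, Finset.mem_toList.2 (Finset.mem_univ c), rfl⟩
        have hle := HOUT _ hgOUT
        rw [sumCeil_eval] at hle
        have hsum : ((D : ℕ) : ℝ) ≤ (((List.finRange D).map (fun r => (out r).get (c r))).map
            (fun t => ((⌈((M : ℝ))⁻¹ * t.eval x⌉ : ℤ) : ℝ))).sum := by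
          have hlen : (((List.finRange D).map (fun r => (out r).get (c r))).map
              (fun t => ((⌈((M : ℝ))⁻¹ * t.eval x⌉ : ℤ) : ℝ))).length = D := by
            simp
          have hlow := listSumLower (((List.finRange D).map (fun r => (out r).get (c r))).map
            (fun t => ((⌈((M : ℝ))⁻¹ * t.eval x⌉ : ℤ) : ℝ))) ?_
          · rw [hlen] at hlow; exact hlow
          intro a ha
          obtain ⟨t, ht, rfl⟩ := List.mem_map.1 ha
          obtain ⟨r, _, rfl⟩ := List.mem_map.1 ht
          have hpos : 0 < ((M : ℝ))⁻¹ * ((out r).get (c r)).eval x :=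
            mul_pos (inv_pos.2 hMpos) (hc r)
          have : 0 < ⌈((M : ℝ))⁻¹ * ((out r).get (c r)).eval x⌉ := Int.ceil_pos.2 hpos
          exact_mod_cast this
        have hcast : (((D:ℚ) - 1 : ℚ) : ℝ) = (D : ℝ) - 1 := by push_cast; ring
        rw [hcast] at hle
        have : (0:ℝ) < 1 := one_pos
        linarith
      · -- feasible → OUT ≤ 0
        rintro ⟨z, hz⟩ g hg
        rw [hOUT] at hg
        obtain ⟨c, _, rfl⟩ := List.mem_map.1 hg
        set w : ℤ := z (Fin.last q) with hwdef
        have hr00 : (0:ℤ) ≤ w % D := Int.emod_nonneg w (by positivity)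
        have hr0D : w % D < D := Int.emod_lt_of_pos w (by exact_mod_cast hDpos)
        have hltD : (w % D).toNat < D := by omega
        set r0 : Fin D := ⟨(w % D).toNat, hltD⟩ with hr0def
        have hr0cast : ((r0 : ℕ) : ℤ) = w % D := Int.toNat_of_nonneg hr00
        -- exact feasibility of the r0 subsystem
        have hfeas0 : ∀ p ∈ sub ((r0 : ℕ) : ℤ),
            (p.1 : ℝ) * ((w / D : ℤ) : ℝ) + p.2.eval (XV x (Fin.init z)) ≤ 0 := by
          intro p hp
          obtain ⟨f, hf, _, hpv⟩ := hkey ((r0 : ℕ) : ℤ) x (Fin.init z) (w / D) p hp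
          rw [hpv]
          have hzz : Fin.snoc (Fin.init z) ((D : ℤ) * (w / D) + ((r0 : ℕ) : ℤ)) = z := by
            rw [hr0cast, Int.mul_ediv_add_emod w (D : ℤ), hwdef]
            exact Fin.snoc_init_self z
          rw [hzz]
          exact hz f hf
        have helim0 : ∀ g' ∈ elimZ (sub ((r0 : ℕ) : ℤ)), g'.eval (XV x (Fin.init z)) ≤ 0 :=
          (elimZ_exact (XV x (Fin.init z))).2 ⟨w / D, hfeas0⟩
        have hout0 : ∀ h ∈ out r0, h.eval x ≤ 0 := (hoiff r0 x).2 ⟨Fin.init z, helim0⟩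
        have hbM := hboundM x z hz
        -- now bound the sum
        rw [sumCeil_eval]
        set tf : Fin D → ℝ :=
          fun r => ((⌈((M : ℝ))⁻¹ * ((out r).get (c r)).eval x⌉ : ℤ) : ℝ) with htf
        have hsum_eq : (((List.finRange D).map (fun r => (out r).get (c r))).map
            (fun t => ((⌈((M : ℝ))⁻¹ * t.eval x⌉ : ℤ) : ℝ))).sum = ∑ r : Fin D, tf r := by
          rw [Fin.sum_univ_def, List.map_map]
          rfl
        rw [hsum_eq]
        have ht0 : tf r0 ≤ 0 := by
          have hv0 : ((out r0).get (c r0)).eval x ≤ 0 :=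
            hout0 _ (List.get_mem _ (c r0))
          have : ((M : ℝ))⁻¹ * ((out r0).get (c r0)).eval x ≤ 0 :=
            mul_nonpos_of_nonneg_of_nonpos (inv_nonneg.2 hMpos.le) hv0
          have hc0 : ⌈((M : ℝ))⁻¹ * ((out r0).get (c r0)).eval x⌉ ≤ (0:ℤ) :=
            Int.ceil_le.2 (by simpa using this)
          show ((⌈((M : ℝ))⁻¹ * ((out r0).get (c r0)).eval x⌉ : ℤ) : ℝ) ≤ 0
          exact_mod_cast hc0
        have ht1 : ∀ r : Fin D, tf r ≤ 1 := by
          intro r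
          have hvM : ((out r).get (c r)).eval x ≤ (M : ℝ) :=
            hbM r _ (List.get_mem _ (c r))
          have h1 : ((M : ℝ))⁻¹ * ((out r).get (c r)).eval x ≤ ((M : ℝ))⁻¹ * (M : ℝ) :=
            mul_le_mul_of_nonneg_left hvM (inv_nonneg.2 hMpos.le)
          rw [inv_mul_cancel₀ (ne_of_gt hMpos)] at h1
          have hc1 : ⌈((M : ℝ))⁻¹ * ((out r).get (c r)).eval x⌉ ≤ (1:ℤ) :=
            Int.ceil_le.2 (by simpa using h1)
          show ((⌈((M : ℝ))⁻¹ * ((out r).get (c r)).eval x⌉ : ℤ) : ℝ) ≤ 1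
          exact_mod_cast hc1
        have hsplit := Finset.add_sum_erase Finset.univ tf (Finset.mem_univ r0)
        have herase : ∑ r ∈ Finset.univ.erase r0, tf r ≤ ((D - 1 : ℕ) : ℝ) := by
          have hcard : (Finset.univ.erase r0).card = D - 1 := by
            rw [Finset.card_erase_of_mem (Finset.mem_univ r0), Finset.card_univ,
              Fintype.card_fin]
          have := Finset.sum_le_card_nsmul (Finset.univ.erase r0) tf 1
            (fun r _ => ht1 r)
          rw [hcard] at this
          simpa using this
        have hDm1 : ((D - 1 : ℕ) : ℝ) = (D : ℝ) - 1 := by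
          have h9 : ((D - 1 : ℕ) : ℝ) = (D:ℝ) - ((1:ℕ):ℝ) := Nat.cast_sub hD1
          simpa using h9
        have hcast : (((D:ℚ) - 1 : ℚ) : ℝ) = (D : ℝ) - 1 := by push_cast; ring
        rw [hcast]
        have : ∑ r : Fin D, tf r ≤ (D:ℝ) - 1 := by
          rw [← hsplit]
          rw [hDm1] at herase
          linarith
        linarith

    · -- soundness
      intro ε hε
      have hk2' : ∀ r : Fin D, ∃ κ₂' : ℝ, 0 ≤ κ₂' ∧ ∀ (X : Fin (n+q) → ℝ) (j : ℤ),
          (∀ p ∈ sub ((r : ℕ) : ℤ), (p.1 : ℝ) * j + p.2.eval X ≤ ε + C) →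
          ∀ g ∈ elimZ (sub ((r : ℕ) : ℤ)), g.eval X ≤ κ₂' :=
        fun r => elimZ_sound (ε + C) (by linarith)
      choose κ₂' hκ₂'0 hκ₂' using hk2'
      have hk3' : ∀ r : Fin D, ∃ κ₃' : ℝ, ∀ x : Fin n → ℝ,
          (∃ z' : Fin q → ℤ, ∀ g ∈ elimZ (sub ((r : ℕ) : ℤ)), g.eval (XV x z') ≤ κ₂' r) →
          ∀ g ∈ out r, g.eval x ≤ κ₃' :=
        fun r => hosnd r (κ₂' r) (hκ₂'0 r)
      choose κ₃' hκ₃' using hk3'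
      set κm : ℝ := ((List.finRange D).map κ₃').foldr max 0 with hκm
      have hκm0 : 0 ≤ κm := (le_foldr_max _ 0).1
      have hκmB : ∀ r : Fin D, κ₃' r ≤ κm := fun r =>
        (le_foldr_max _ 0).2 _ (List.mem_map.2 ⟨r, List.mem_finRange r, rfl⟩)
      refine ⟨(D : ℝ) * (((M : ℝ))⁻¹ * κm + 1), ?_⟩
      rintro x ⟨z, hz⟩ g hg
      rw [hOUT] at hg
      obtain ⟨c, _, rfl⟩ := List.mem_map.1 hg
      have hall : ∀ r : Fin D, ∀ h ∈ out r, h.eval x ≤ κ₃' r := by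
        intro r h hh
        have h1 := htrans ε x z hz r
        have h2 : ∀ g' ∈ elimZ (sub ((r : ℕ) : ℤ)), g'.eval (XV x (Fin.init z)) ≤ κ₂' r :=
          hκ₂' r (XV x (Fin.init z)) _ h1
        exact hκ₃' r x ⟨Fin.init z, h2⟩ h hh
      rw [sumCeil_eval]
      have hup : (((List.finRange D).map (fun r => (out r).get (c r))).map
          (fun t => ((⌈((M : ℝ))⁻¹ * t.eval x⌉ : ℤ) : ℝ))).sum
            ≤ (D : ℝ) * (((M : ℝ))⁻¹ * κm + 1) := by
        have hlen : (((List.finRange D).map (fun r => (out r).get (c r))).map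
            (fun t => ((⌈((M : ℝ))⁻¹ * t.eval x⌉ : ℤ) : ℝ))).length = D := by simp
        have hupp := listSumUpper (((List.finRange D).map (fun r => (out r).get (c r))).map
            (fun t => ((⌈((M : ℝ))⁻¹ * t.eval x⌉ : ℤ) : ℝ))) (((M : ℝ))⁻¹ * κm + 1) ?_
        · rw [hlen] at hupp; exact hupp
        intro a ha
        obtain ⟨t, ht, rfl⟩ := List.mem_map.1 ha
        obtain ⟨r, _, rfl⟩ := List.mem_map.1 ht
        have hv := hall r _ (List.get_mem _ (c r))
        have h5 : ((M : ℝ))⁻¹ * ((out r).get (c r)).eval x ≤ ((M : ℝ))⁻¹ * κm :=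
          le_trans (mul_le_mul_of_nonneg_left hv (inv_nonneg.2 hMpos.le))
            (mul_le_mul_of_nonneg_left (hκmB r) (inv_nonneg.2 hMpos.le))
        have h6 : ((⌈((M : ℝ))⁻¹ * ((out r).get (c r)).eval x⌉ : ℤ) : ℝ)
            ≤ ((M : ℝ))⁻¹ * ((out r).get (c r)).eval x + 1 :=
          le_of_lt (Int.ceil_lt_add_one _)
        linarith
      have hcast : (((D:ℚ) - 1 : ℚ) : ℝ) = (D : ℝ) - 1 := by push_cast; ring
      rw [hcast]
      have hD1' : (1:ℝ) ≤ (D:ℝ) := by exact_mod_cast hD1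
      linarith

section FM

def Row (N : ℕ) : Type := (Fin N → ℚ) × ℚ

def evalRow {N : ℕ} (ρ : Row N) (X : Fin N → ℝ) : ℝ :=
  (∑ j, (ρ.1 j : ℝ) * X j) + (ρ.2 : ℝ)

def initRow {N : ℕ} (ρ : Row (N+1)) : Row N := (Fin.init ρ.1, ρ.2)

def addRow {N : ℕ} (ρ σ : Row N) : Row N := (fun i => ρ.1 i + σ.1 i, ρ.2 + σ.2)

def smulRow {N : ℕ} (a : ℚ) (ρ : Row N) : Row N := (fun i => a * ρ.1 i, a * ρ.2)

lemma evalRow_add {N : ℕ} (ρ σ : Row N) (X : Fin N → ℝ) :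
    evalRow (addRow ρ σ) X = evalRow ρ X + evalRow σ X := by
  simp only [evalRow, addRow]
  push_cast
  rw [show (∑ x : Fin N, (((ρ.1 x : ℝ)) + ((σ.1 x : ℝ))) * X x)
      = ∑ x : Fin N, (((ρ.1 x : ℝ)) * X x + ((σ.1 x : ℝ)) * X x) from
    Finset.sum_congr rfl (fun x _ => by ring), Finset.sum_add_distrib]
  ring

lemma evalRow_smul {N : ℕ} (a : ℚ) (ρ : Row N) (X : Fin N → ℝ) :
    evalRow (smulRow a ρ) X = (a : ℝ) * evalRow ρ X := by
  simp only [evalRow, smulRow]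
  push_cast
  rw [mul_add, Finset.mul_sum]
  congr 1
  apply Finset.sum_congr rfl
  intro i _
  ring

lemma evalRow_snoc {N : ℕ} (ρ : Row (N+1)) (X : Fin N → ℝ) (y : ℝ) :
    evalRow ρ (Fin.snoc X y) = evalRow (initRow ρ) X + (ρ.1 (Fin.last N) : ℝ) * y := by
  simp only [evalRow, initRow, Fin.sum_univ_castSucc, Fin.snoc_castSucc, Fin.snoc_last, Fin.init]
  ring

def elimR {N : ℕ} (L : List (Row (N+1))) : List (Row N) :=
  (L.filterMap fun ρ => if ρ.1 (Fin.last N) = 0 then some (initRow ρ) else none) ++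
  (L.flatMap fun s => L.filterMap fun t =>
    if s.1 (Fin.last N) < 0 ∧ 0 < t.1 (Fin.last N) then
      some (addRow (smulRow (t.1 (Fin.last N)) (initRow s))
        (smulRow (-(s.1 (Fin.last N))) (initRow t))) else none)

lemma elimR_exact {N : ℕ} (L : List (Row (N+1))) (X : Fin N → ℝ) :
    (∀ σ ∈ elimR L, evalRow σ X ≤ 0) ↔
    ∃ y : ℝ, ∀ ρ ∈ L, evalRow ρ (Fin.snoc X y) ≤ 0 := by
  constructor
  · intro H
    by_cases hneg : ∃ s ∈ L, s.1 (Fin.last N) < 0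
    · obtain ⟨s₀, hs₀⟩ := hneg
      set l := (L.filter (fun p => decide (p.1 (Fin.last N) < 0))).map
        (fun s => evalRow (initRow s) X / ((-(s.1 (Fin.last N)) : ℚ) : ℝ)) with hl
      have hlne : l ≠ [] := by
        simp only [hl, ne_eq, List.map_eq_nil_iff, List.filter_eq_nil_iff]
        push_neg
        exact ⟨s₀, hs₀.1, by simpa using hs₀.2⟩
      obtain ⟨y, hyl, hymax⟩ := listArgmax l hlne
      obtain ⟨sm, hsm, hsme⟩ := List.mem_map.1 hyl
      have hsmL : sm ∈ L := (List.mem_filter.1 hsm).1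
      have hsmneg : sm.1 (Fin.last N) < 0 := by simpa using (List.mem_filter.1 hsm).2
      have hsmpos : (0:ℝ) < ((-(sm.1 (Fin.last N)) : ℚ) : ℝ) := by
        have : (0:ℚ) < -(sm.1 (Fin.last N)) := by linarith
        exact_mod_cast this
      refine ⟨y, ?_⟩
      intro ρ hρ
      rw [evalRow_snoc]
      rcases lt_trichotomy (ρ.1 (Fin.last N)) 0 with hc | hc | hc
      · have hρl : evalRow (initRow ρ) X / ((-(ρ.1 (Fin.last N)) : ℚ) : ℝ) ∈ l := by
          rw [hl]
          exact List.mem_map.2 ⟨ρ, List.mem_filter.2 ⟨hρ, by simpa using hc⟩, rfl⟩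
        have h1 := hymax _ hρl
        have hpos : (0:ℝ) < ((-(ρ.1 (Fin.last N)) : ℚ) : ℝ) := by
          have : (0:ℚ) < -(ρ.1 (Fin.last N)) := by linarith
          exact_mod_cast this
        rw [div_le_iff₀ hpos] at h1
        have he : ((ρ.1 (Fin.last N) : ℚ) : ℝ) = -((-(ρ.1 (Fin.last N)) : ℚ) : ℝ) := by
          push_cast; ring
        rw [he]
        nlinarith [h1]
      · rw [hc]
        have hmem : initRow ρ ∈ elimR L := List.mem_append.2 (Or.inl
          (List.mem_filterMap.2 ⟨ρ, hρ, by rw [if_pos hc]⟩))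
        have := H _ hmem
        simp only [Rat.cast_zero]
        linarith
      · have hmem : addRow (smulRow (ρ.1 (Fin.last N)) (initRow sm))
            (smulRow (-(sm.1 (Fin.last N))) (initRow ρ)) ∈ elimR L := by
          apply List.mem_append.2
          refine Or.inr (List.mem_flatMap.2 ⟨sm, hsmL, List.mem_filterMap.2 ⟨ρ, hρ, ?_⟩⟩)
          rw [if_pos ⟨hsmneg, hc⟩]
        have h1 := H _ hmem
        rw [evalRow_add, evalRow_smul, evalRow_smul] at h1
        have hy : y * ((-(sm.1 (Fin.last N)) : ℚ) : ℝ) = evalRow (initRow sm) X := by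
          rw [← hsme, div_mul_cancel₀ _ (ne_of_gt hsmpos)]
        have htpos : (0:ℝ) < ((ρ.1 (Fin.last N) : ℚ) : ℝ) := by exact_mod_cast hc
        nlinarith [h1, hy]
    · push_neg at hneg
      obtain ⟨y, hy⟩ := listRealBelow ((L.filter (fun p => decide (0 < p.1 (Fin.last N)))).map
        (fun t => -(evalRow (initRow t) X) / ((t.1 (Fin.last N) : ℚ) : ℝ)))
      refine ⟨y, ?_⟩
      intro ρ hρ
      rw [evalRow_snoc]
      rcases lt_trichotomy (ρ.1 (Fin.last N)) 0 with hc | hc | hc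
      · exact absurd hc (not_lt.2 (hneg ρ hρ))
      · rw [hc]
        have hmem : initRow ρ ∈ elimR L := List.mem_append.2 (Or.inl
          (List.mem_filterMap.2 ⟨ρ, hρ, by rw [if_pos hc]⟩))
        have := H _ hmem
        simp only [Rat.cast_zero]
        linarith
      · have hmem : -(evalRow (initRow ρ) X) / ((ρ.1 (Fin.last N) : ℚ) : ℝ)
            ∈ (L.filter (fun p => decide (0 < p.1 (Fin.last N)))).map
              (fun t => -(evalRow (initRow t) X) / ((t.1 (Fin.last N) : ℚ) : ℝ)) :=
          List.mem_map.2 ⟨ρ, List.mem_filter.2 ⟨hρ, by simpa using hc⟩, rfl⟩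
        have h1 := hy _ hmem
        have hpos : (0:ℝ) < ((ρ.1 (Fin.last N) : ℚ) : ℝ) := by exact_mod_cast hc
        rw [le_div_iff₀ hpos] at h1
        nlinarith [h1]
  · rintro ⟨y, hY⟩ σ hσ
    rcases List.mem_append.1 hσ with h | h
    · obtain ⟨ρ, hρ, he⟩ := List.mem_filterMap.1 h
      by_cases hz : ρ.1 (Fin.last N) = 0
      · rw [if_pos hz] at he
        obtain rfl := Option.some_injective _ he
        have := hY ρ hρ
        rw [evalRow_snoc, hz] at this
        simpa using this
      · rw [if_neg hz] at he
        exact absurd he (by simp)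
    · obtain ⟨s, hs, hmem2⟩ := List.mem_flatMap.1 h
      obtain ⟨t, ht, he⟩ := List.mem_filterMap.1 hmem2
      by_cases hst : s.1 (Fin.last N) < 0 ∧ 0 < t.1 (Fin.last N)
      · rw [if_pos hst] at he
        obtain rfl := Option.some_injective _ he
        rw [evalRow_add, evalRow_smul, evalRow_smul]
        have h1 := hY s hs
        have h2 := hY t ht
        rw [evalRow_snoc] at h1 h2
        have hsneg : ((s.1 (Fin.last N) : ℚ) : ℝ) < 0 := by exact_mod_cast hst.1
        have htpos : (0:ℝ) < ((t.1 (Fin.last N) : ℚ) : ℝ) := by exact_mod_cast hst.2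
        have hcast : ((-(s.1 (Fin.last N)) : ℚ) : ℝ) = -((s.1 (Fin.last N) : ℚ) : ℝ) := by
          push_cast; ring
        rw [hcast]
        nlinarith [h1, h2]
      · rw [if_neg hst] at he
        exact absurd he (by simp)

lemma lemA {N : ℕ} : ∀ (p : ℕ) (rows : List (Row (N + p))),
    ∃ rows' : List (Row N), ∀ X : Fin N → ℝ,
      (∀ σ ∈ rows', evalRow σ X ≤ 0) ↔
      ∃ Y : Fin p → ℝ, ∀ ρ ∈ rows, evalRow ρ (Fin.append X Y) ≤ 0 := by
  intro p
  induction p with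
  | zero =>
    intro rows
    refine ⟨rows, ?_⟩
    intro X
    constructor
    · intro H
      refine ⟨fun i => 0, fun ρ hρ => ?_⟩
      rw [show (Fin.append X (fun _ : Fin 0 => (0:ℝ)) : Fin (N+0) → ℝ) = X from
        append_empty _ _]
      exact H ρ hρ
    · rintro ⟨Y, hY⟩ σ hσ
      have := hY σ hσ
      rwa [show (Fin.append X Y : Fin (N+0) → ℝ) = X from append_empty _ _] at this
  | succ p ih =>
    intro rows
    obtain ⟨rows₁, hrows₁⟩ := ih (elimR rows)
    refine ⟨rows₁, ?_⟩
    intro X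
    rw [hrows₁ X]
    constructor
    · rintro ⟨Y', hY'⟩
      obtain ⟨y, hy⟩ := (elimR_exact rows (Fin.append X Y')).1 hY'
      refine ⟨Fin.snoc Y' y, ?_⟩
      intro ρ hρ
      have := hy ρ hρ
      rwa [← Fin.append_snoc] at this
    · rintro ⟨Y, hY⟩
      refine ⟨Fin.init Y, ?_⟩
      apply (elimR_exact rows (Fin.append X (Fin.init Y))).2
      refine ⟨Y (Fin.last p), ?_⟩
      intro ρ hρ
      have := hY ρ hρ
      rwa [← Fin.snoc_init_self Y, Fin.append_snoc] at this
      
end FM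
lemma row_eval {n q p m : ℕ} (A : Matrix (Fin m) (Fin n) ℚ) (B : Matrix (Fin m) (Fin p) ℚ)
    (C : Matrix (Fin m) (Fin q) ℚ) (d : Fin m → ℚ) (i : Fin m)
    (x : Fin n → ℝ) (z : Fin q → ℤ) (Y : Fin p → ℝ) :
    evalRow (Fin.append (Fin.append (fun j => -A i j) (fun j => -C i j)) (fun j => -B i j), d i)
        (Fin.append (XV x z) Y)
      = (d i : ℝ) - ((∑ j, (A i j : ℝ) * x j) + (∑ j, (B i j : ℝ) * Y j)
          + (∑ j, (C i j : ℝ) * (z j : ℝ))) := by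
  simp only [evalRow, XV, castZ, Fin.sum_univ_add, Fin.append_left, Fin.append_right]
  push_cast
  rw [show (∑ j : Fin n, -(A i j : ℝ) * x j) = -(∑ j : Fin n, (A i j : ℝ) * x j) from by
      rw [← Finset.sum_neg_distrib]; exact Finset.sum_congr rfl (fun j _ => by ring),
    show (∑ j : Fin q, -(C i j : ℝ) * ((z j : ℤ) : ℝ)) = -(∑ j : Fin q, (C i j : ℝ) * ((z j : ℤ) : ℝ)) from by
      rw [← Finset.sum_neg_distrib]; exact Finset.sum_congr rfl (fun j _ => by ring),
    show (∑ j : Fin p, -(B i j : ℝ) * Y j) = -(∑ j : Fin p, (B i j : ℝ) * Y j) from by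
      rw [← Finset.sum_neg_distrib]; exact Finset.sum_congr rfl (fun j _ => by ring)]
  ring

theorem milp_representable_is_mic' {n : ℕ} (S : Set (Fin n → ℝ))
    (hS : MILPRepresentable S) :
    ∃ (N : ℕ) (g : Fin N → ChvatalTree n),
      (∀ i, (g i).Valid) ∧ S = {x | ∀ i, (g i).eval x ≤ 0} := by
  obtain ⟨m, p, q, A, B, C, d, hSeq⟩ := hS
  set rows : List (Row ((n + q) + p)) :=
    (List.finRange m).map (fun i =>
      (Fin.append (Fin.append (fun j => -A i j) (fun j => -C i j)) (fun j => -B i j), d i))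
    with hrows
  obtain ⟨rows', hrows'⟩ := lemA p rows
  set sys : List (ChvatalTree (n + q)) := rows'.map (fun ρ => ChvatalTree.leaf ρ.1 ρ.2)
    with hsys
  have hsysval : ∀ f ∈ sys, f.Valid := by
    intro f hf
    obtain ⟨ρ, _, rfl⟩ := List.mem_map.1 hf
    trivial
  obtain ⟨out, hoval, hoiff, -⟩ := lemB q sys hsysval
  refine ⟨out.length, fun i => out.get i, fun i => hoval _ (List.get_mem _ i), ?_⟩
  rw [hSeq]
  ext x
  simp only [Set.mem_setOf_eq]
  have hsys_eval : ∀ (z : Fin q → ℤ),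
      (∀ f ∈ sys, f.eval (XV x z) ≤ 0) ↔ (∀ σ ∈ rows', evalRow σ (XV x z) ≤ 0) := by
    intro z
    constructor
    · intro H σ hσ
      exact H (ChvatalTree.leaf σ.1 σ.2) (List.mem_map.2 ⟨σ, hσ, rfl⟩)
    · intro H f hf
      obtain ⟨σ, hσ, rfl⟩ := List.mem_map.1 hf
      exact H σ hσ
  constructor
  · rintro ⟨y, z, hyz⟩ i
    have hfeas : ∀ f ∈ sys, f.eval (XV x z) ≤ 0 := by
      rw [hsys_eval z]
      rw [hrows' (XV x z)]
      refine ⟨y, ?_⟩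
      intro ρ hρ
      obtain ⟨i', _, rfl⟩ := List.mem_map.1 hρ
      rw [row_eval]
      have := hyz i'
      linarith
    have := (hoiff x).2 ⟨z, hfeas⟩
    exact this _ (List.get_mem _ i)
  · intro H
    have hout : ∀ g ∈ out, g.eval x ≤ 0 := by
      intro g hg
      obtain ⟨i, rfl⟩ := List.mem_iff_get.1 hg
      exact H i
    obtain ⟨z, hz⟩ := (hoiff x).1 hout
    rw [hsys_eval z, hrows' (XV x z)] at hz
    obtain ⟨Y, hY⟩ := hz
    refine ⟨Y, z, ?_⟩
    intro i
    have := hY _ (List.mem_map.2 ⟨i, List.mem_finRange i, rfl⟩)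
    rw [row_eval] at this
    linarith


/-- Every MILP-representable set `S ⊆ ℝ^n` is a MIC set: there are
finitely many affine Chvátal functions `gᵢ` with `S = {x : gᵢ(x) ≤ 0 for all i}`. -/
theorem milp_representable_is_mic {n : ℕ} (S : Set (Fin n → ℝ))
    (hS : MILPRepresentable S) :
    ∃ (N : ℕ) (g : Fin N → ChvatalTree n),
      (∀ i, (g i).Valid) ∧ S = {x | ∀ i, (g i).eval x ≤ 0} := by
  exact milp_representable_is_mic' S hS
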